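/- Let m be a prime number and χ a real Dirichlet character mod m with χ(p) ≠ 1 for every prime p ≤ x, where 1 ≤ x < m. Then for 1 ≤ n ≤ x one has ρ(n) = 1 if n is a perfect square and ρ(n) = 0 otherwise, where ρ(n) = ∑_{d ∣ n} χ(d). Consequently ∑_{1 ≤ n ≤ x} ρ(n) ≤ 2·x^{1/2}. -/

import Mathlib

open ArithmeticFunction Finset
open scoped ArithmeticFunction.Omega ArithmeticFunction.zeta

/-- The Liouville-type function `λ(n) = (-1)^Ω(n)` as an arithmetic function. -/
noncomputable def lamAF : ArithmeticFunction ℝ :=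
  ⟨fun d => if d = 0 then 0 else (-1 : ℝ) ^ (Ω d), by simp⟩

lemma lamAF_apply {d : ℕ} (hd : d ≠ 0) : lamAF d = (-1 : ℝ) ^ (Ω d) := by
  simp [lamAF, hd]

lemma lamAF_isMultiplicative : lamAF.IsMultiplicative := by
  refine ArithmeticFunction.IsMultiplicative.iff_ne_zero.mpr ⟨?_, ?_⟩
  · simp [lamAF]
  · intro a b ha hb _
    rw [lamAF_apply (mul_ne_zero ha hb), lamAF_apply ha, lamAF_apply hb,
      ArithmeticFunction.cardFactors_mul ha hb, pow_add]

lemma isSquare_iff_even_factorization {n : ℕ} (hn : n ≠ 0) :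
    IsSquare n ↔ ∀ p, Even (n.factorization p) := by
  constructor
  · rintro ⟨k, rfl⟩ p
    have hk : k ≠ 0 := by simpa [Nat.mul_eq_zero] using hn
    rw [Nat.factorization_mul hk hk]
    exact ⟨k.factorization p, by simp [two_mul]⟩
  · intro h
    refine ⟨n.factorization.prod fun p e => p ^ (e / 2), ?_⟩
    conv_lhs => rw [← Nat.factorization_prod_pow_eq_self hn]
    rw [← Finsupp.prod_mul]
    refine Finsupp.prod_congr fun p hp => ?_
    rw [← pow_add]
    congr 1
    obtain ⟨c, hc⟩ := h p
    omega

/-- Key identity: `∑_{d ∣ n} (-1)^Ω(d) = 1` if `n` is a square, `0` otherwise. -/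
lemma sum_divisors_lam {n : ℕ} (hn : n ≠ 0) :
    ∑ d ∈ n.divisors, (-1 : ℝ) ^ (Ω d) = if IsSquare n then 1 else 0 := by
  have hF : ((ζ : ArithmeticFunction ℝ) * lamAF).IsMultiplicative :=
    ArithmeticFunction.isMultiplicative_zeta.natCast.mul lamAF_isMultiplicative
  have h1 : ∑ d ∈ n.divisors, (-1 : ℝ) ^ (Ω d)
      = ((ζ : ArithmeticFunction ℝ) * lamAF) n := by
    rw [ArithmeticFunction.coe_zeta_mul_apply]
    exact Finset.sum_congr rfl fun d hd =>
      (lamAF_apply (Nat.pos_of_mem_divisors hd).ne').symm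
  have hpp : ∀ p k : ℕ, p.Prime →
      ((ζ : ArithmeticFunction ℝ) * lamAF) (p ^ k)
        = if Even k then 1 else 0 := by
    intro p k hp
    rw [ArithmeticFunction.coe_zeta_mul_apply, Nat.sum_divisors_prime_pow hp]
    have : ∀ j ∈ Finset.range (k + 1), lamAF (p ^ j) = (-1 : ℝ) ^ j := by
      intro j _
      rw [lamAF_apply (pow_ne_zero _ hp.pos.ne'),
        ArithmeticFunction.cardFactors_apply_prime_pow hp]
    rw [Finset.sum_congr rfl this, neg_one_geom_sum]
    by_cases hk : Even k <;> simp [Nat.even_add_one, hk]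
  rw [h1, ArithmeticFunction.IsMultiplicative.multiplicative_factorization _ hF hn,
    Finsupp.prod]
  by_cases hsq : IsSquare n
  · rw [if_pos hsq]
    refine Finset.prod_eq_one fun p hp => ?_
    rw [hpp p _ (Nat.prime_of_mem_primeFactors (by simpa using hp)),
      if_pos ((isSquare_iff_even_factorization hn).mp hsq p)]
  · rw [if_neg hsq]
    obtain ⟨p, hpodd⟩ : ∃ p, ¬ Even (n.factorization p) := by
      by_contra h
      push_neg at h
      exact hsq ((isSquare_iff_even_factorization hn).mpr h)
    have hpsupp : p ∈ n.factorization.support := by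
      rw [Finsupp.mem_support_iff]
      intro h
      exact hpodd (h ▸ Even.zero)
    refine Finset.prod_eq_zero hpsupp ?_
    rw [hpp p _ (Nat.prime_of_mem_primeFactors (by simpa using hpsupp)), if_neg hpodd]

/-- Let `m` be prime and `χ` a real Dirichlet character mod `m` with `χ(p) ≠ 1` for all
primes `p ≤ x`, where `1 ≤ x < m`. Then for `1 ≤ n ≤ x`, `ρ(n) = ∑_{d ∣ n} χ(d)` equals
`1` if `n` is a perfect square and `0` otherwise; consequently
`∑_{1 ≤ n ≤ x} ρ(n) ≤ 2 √x`. -/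
theorem divisor_sum_character_squares (m : ℕ) (hm : m.Prime)
    (χ : DirichletCharacter ℝ m) (x : ℝ) (hx1 : 1 ≤ x) (hxm : x < m)
    (hχ : ∀ p : ℕ, p.Prime → (p : ℝ) ≤ x → χ (p : ZMod m) ≠ 1) :
    (∀ n : ℕ, 1 ≤ n → (n : ℝ) ≤ x →
      ∑ d ∈ n.divisors, χ (d : ZMod m) = if IsSquare n then 1 else 0) ∧
    ∑ n ∈ Finset.Icc 1 ⌊x⌋₊, ∑ d ∈ n.divisors, χ (d : ZMod m) ≤ 2 * Real.sqrt x := by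
  haveI : Fact m.Prime := ⟨hm⟩
  -- Step 1: χ(p) = -1 for primes p ≤ x.
  have hneg : ∀ p : ℕ, p.Prime → (p : ℝ) ≤ x → χ (p : ZMod m) = -1 := by
    intro p hp hpx
    have hplt : p < m := by exact_mod_cast lt_of_le_of_lt hpx hxm
    have hp0 : (p : ZMod m) ≠ 0 := by
      rw [Ne, ZMod.natCast_eq_zero_iff]
      exact fun h => absurd (Nat.le_of_dvd hp.pos h) (not_le.mpr hplt)
    have hpow : χ (p : ZMod m) ^ (m - 1) = 1 := by
      rw [← map_pow]
      have : ((p : ZMod m)) ^ (m - 1) = 1 := by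
        have : Fintype.card (ZMod m) = m := ZMod.card m
        exact ZMod.pow_card_sub_one_eq_one hp0
      rw [this, map_one]
    rcases pow_eq_one_iff_cases.mp hpow with h | h | h
    · exact absurd h (by have := hm.two_le; omega)
    · exact absurd h (hχ p hp hpx)
    · exact h.1
  -- Step 2: χ(d) = (-1)^Ω(d) whenever every prime divisor p of d has χ(p) = -1.
  have hchi : ∀ d : ℕ, d ≠ 0 → (∀ p : ℕ, p.Prime → p ∣ d → χ (p : ZMod m) = -1) →
      χ (d : ZMod m) = (-1 : ℝ) ^ (Ω d) := by
    intro d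
    induction d using Nat.strong_induction_on with
    | _ d ih =>
      intro hd hprimes
      rcases eq_or_lt_of_le (Nat.one_le_iff_ne_zero.mpr hd) with h1 | h1
      · rw [← h1]; simp
      · set p := d.minFac with hp
        have hpp : p.Prime := Nat.minFac_prime (by omega)
        have hpd : p ∣ d := Nat.minFac_dvd d
        have hdq : d = p * (d / p) := (Nat.mul_div_cancel' hpd).symm
        have hq0 : d / p ≠ 0 := by
          intro h
          rw [h, mul_zero] at hdq; exact hd hdq
        have hqlt : d / p < d := Nat.div_lt_self (by omega) hpp.one_lt
        have hrec : χ ((d / p : ℕ) : ZMod m) = (-1 : ℝ) ^ (Ω (d / p)) :=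
          ih _ hqlt hq0 fun q hq hqdvd => hprimes q hq (hqdvd.trans (Nat.div_dvd_of_dvd hpd))
        calc χ ((d : ℕ) : ZMod m) = χ (((p * (d / p) : ℕ)) : ZMod m) := by rw [← hdq]
          _ = χ ((p : ZMod m)) * χ (((d / p : ℕ) : ZMod m)) := by
              rw [Nat.cast_mul, map_mul]
          _ = (-1 : ℝ) * (-1 : ℝ) ^ (Ω (d / p)) := by
              rw [hprimes p hpp hpd, hrec]
          _ = (-1 : ℝ) ^ (Ω d) := by
              conv_rhs => rw [hdq]
              rw [ArithmeticFunction.cardFactors_mul hpp.pos.ne' hq0,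
                ArithmeticFunction.cardFactors_apply_prime hpp, pow_add, pow_one]
  -- Part 1.
  have part1 : ∀ n : ℕ, 1 ≤ n → (n : ℝ) ≤ x →
      ∑ d ∈ n.divisors, χ (d : ZMod m) = if IsSquare n then 1 else 0 := by
    intro n hn1 hnx
    have hn0 : n ≠ 0 := by omega
    rw [← sum_divisors_lam hn0]
    refine Finset.sum_congr rfl fun d hd => ?_
    have hdn : d ∣ n := (Nat.mem_divisors.mp hd).1
    have hd0 : d ≠ 0 := (Nat.pos_of_mem_divisors hd).ne'
    refine hchi d hd0 fun p hp hpd => hneg p hp ?_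
    have hple : p ≤ n := Nat.le_of_dvd (by omega) (hpd.trans hdn)
    calc (p : ℝ) ≤ (n : ℝ) := by exact_mod_cast hple
      _ ≤ x := hnx
  refine ⟨part1, ?_⟩
  -- Part 2.
  set N := ⌊x⌋₊ with hN
  have hsum : ∑ n ∈ Finset.Icc 1 N, ∑ d ∈ n.divisors, χ (d : ZMod m)
      = ((Finset.Icc 1 N).filter (fun n => IsSquare n)).card := by
    rw [← Finset.sum_boole]
    refine Finset.sum_congr rfl fun n hn => ?_
    rw [Finset.mem_Icc] at hn
    have hnx : (n : ℝ) ≤ x := le_trans (by exact_mod_cast hn.2) (Nat.floor_le (by linarith))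
    exact part1 n hn.1 hnx
  have hcard : ((Finset.Icc 1 N).filter (fun n => IsSquare n)).card ≤ N.sqrt := by
    have : ((Finset.Icc 1 N).filter (fun n => IsSquare n)).card
        ≤ (Finset.Icc 1 N.sqrt).card := by
      refine Finset.card_le_card_of_injOn Nat.sqrt ?_ ?_
      · intro n hn
        rw [Finset.mem_coe, Finset.mem_filter, Finset.mem_Icc] at hn
        obtain ⟨⟨hn1, hnN⟩, k, hk⟩ := hn
        rw [Finset.mem_coe, Finset.mem_Icc]
        constructor
        · have : 1 ≤ n := hn1
          exact Nat.one_le_iff_ne_zero.mpr (by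
            intro h
            rw [Nat.sqrt_eq_zero] at h <;> omega)
        · exact Nat.sqrt_le_sqrt hnN
      · intro a ha b hb hab
        rw [Finset.mem_coe, Finset.mem_filter] at ha hb
        obtain ⟨-, ka, hka⟩ := ha
        obtain ⟨-, kb, hkb⟩ := hb
        have ha' : a.sqrt * a.sqrt = a := by rw [hka, Nat.sqrt_eq]
        have hb' : b.sqrt * b.sqrt = b := by rw [hkb, Nat.sqrt_eq]
        rw [← ha', ← hb', hab]
    simpa using this
  rw [hsum]
  have hsqle : (N.sqrt : ℝ) ≤ Real.sqrt x := by
    rw [Real.le_sqrt (by positivity) (by linarith)]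
    have h1 : (N.sqrt : ℕ) ^ 2 ≤ N := Nat.sqrt_le' N |>.trans_eq (by ring) |> le_of_eq_of_le rfl
    have h2 : ((N.sqrt ^ 2 : ℕ) : ℝ) ≤ (N : ℝ) := by
      exact_mod_cast Nat.pow_le_pow_left (le_refl N.sqrt) 2 |>.trans h1
    calc ((N.sqrt : ℝ)) ^ 2 = ((N.sqrt ^ 2 : ℕ) : ℝ) := by push_cast; ring
      _ ≤ (N : ℝ) := h2
      _ ≤ x := Nat.floor_le (by linarith)
  have hs0 : 0 ≤ Real.sqrt x := Real.sqrt_nonneg x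
  calc (((Finset.Icc 1 N).filter (fun n => IsSquare n)).card : ℝ)
      ≤ (N.sqrt : ℝ) := by exact_mod_cast hcard
    _ ≤ Real.sqrt x := hsqle
    _ ≤ 2 * Real.sqrt x := by linarith
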